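/- Let a, b, c, d be real numbers with b ≠ 0 and d ≠ 0, let a₀ : ℝ → ℝ, let U ⊆ ℝ be open, and let y : ℝ → ℝ be three times continuously differentiable on U with y′′′(x) + a₀(x)y(x) = 0 for all x ∈ U. Define φ(x̄) = (x̄ − c(1 + a·x̄))/(b(1 + a·x̄)), t(x̄) = 1 + a·x̄, and ȳ(x̄) = d·t(x̄)²·y(φ(x̄)). Then for every x̄ with t(x̄) ≠ 0 and φ(x̄) ∈ U, one has ȳ′′′(x̄) + ā₀(x̄)·ȳ(x̄) = 0, where ā₀(x̄) = a₀(φ(x̄))/(b³ t(x̄)⁶). -/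

import Mathlib

/-- The point transformation of the independent variable:
`φ(x̄) = (x̄ − c(1 + a x̄)) / (b(1 + a x̄))`. -/
noncomputable def phi (a b c : ℝ) (x : ℝ) : ℝ :=
  (x - c * (1 + a * x)) / (b * (1 + a * x))

set_option maxHeartbeats 1000000 in
/-- the structure invariance transformation for `y′′′ + a₀ y = 0`:
if `y′′′ + a₀ y = 0` on `U`, then `ȳ(x̄) = d (1+a x̄)² y(φ(x̄))` satisfies
`ȳ′′′ + ā₀ ȳ = 0` with `ā₀(x̄) = a₀(φ(x̄))/(b³ (1+a x̄)⁶)`. -/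
theorem stmt_3 (a b c d : ℝ) (hb : b ≠ 0) (hd : d ≠ 0)
    (a0 : ℝ → ℝ) (U : Set ℝ) (hU : IsOpen U) (y : ℝ → ℝ)
    (hy : ContDiffOn ℝ 3 y U)
    (hode : ∀ x ∈ U, iteratedDeriv 3 y x + a0 x * y x = 0)
    (xb : ℝ) (ht : 1 + a * xb ≠ 0) (hφ : phi a b c xb ∈ U) :
    iteratedDeriv 3 (fun s => d * (1 + a * s) ^ 2 * y (phi a b c s)) xb
      + (a0 (phi a b c xb) / (b ^ 3 * (1 + a * xb) ^ 6))
          * (d * (1 + a * xb) ^ 2 * y (phi a b c xb)) = 0 := by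
  set φ := phi a b c with hφdef
  set y1 := deriv y with hy1def
  set y2 := deriv y1 with hy2def
  set y3 := deriv y2 with hy3def
  have hdy : DifferentiableOn ℝ y U := hy.differentiableOn (by norm_num)
  have hy1c : ContDiffOn ℝ 2 y1 U := hy.deriv_of_isOpen hU (by norm_num)
  have hdy1 : DifferentiableOn ℝ y1 U := hy1c.differentiableOn (by norm_num)
  have hy2c : ContDiffOn ℝ 1 y2 U := hy1c.deriv_of_isOpen hU (by norm_num)
  have hdy2 : DifferentiableOn ℝ y2 U := hy2c.differentiableOn (by norm_num)
  have hYd : ∀ x ∈ U, HasDerivAt y (y1 x) x := fun x hx =>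
    (hdy.differentiableAt (hU.mem_nhds hx)).hasDerivAt
  have hY1d : ∀ x ∈ U, HasDerivAt y1 (y2 x) x := fun x hx =>
    (hdy1.differentiableAt (hU.mem_nhds hx)).hasDerivAt
  have hY2d : ∀ x ∈ U, HasDerivAt y2 (y3 x) x := fun x hx =>
    (hdy2.differentiableAt (hU.mem_nhds hx)).hasDerivAt
  -- linear factor derivative
  have hlin : ∀ s : ℝ, HasDerivAt (fun x : ℝ => 1 + a * x) a s := fun s => by
    simpa using ((hasDerivAt_id s).const_mul a).const_add 1
  -- derivative of phi
  have hφd : ∀ s : ℝ, 1 + a * s ≠ 0 → HasDerivAt φ (1 / (b * (1 + a * s) ^ 2)) s := by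
    intro s hs
    have hden : b * (1 + a * s) ≠ 0 := mul_ne_zero hb hs
    have hnum : HasDerivAt (fun x : ℝ => x - c * (1 + a * x)) (1 - c * a) s :=
      (hasDerivAt_id s).sub ((hlin s).const_mul c)
    have hdenf : HasDerivAt (fun x : ℝ => b * (1 + a * x)) (b * a) s := (hlin s).const_mul b
    have key := hnum.div hdenf hden
    have hval : ((1 - c * a) * (b * (1 + a * s)) - (s - c * (1 + a * s)) * (b * a)) /
        (b * (1 + a * s)) ^ 2 = 1 / (b * (1 + a * s) ^ 2) := by
      field_simp
      ring
    rw [hval] at key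
    exact key
  -- the open set of good points
  set V : Set ℝ := {x : ℝ | 1 + a * x ≠ 0} ∩ φ ⁻¹' U with hVdef
  have hW : IsOpen {x : ℝ | 1 + a * x ≠ 0} := by
    have : {x : ℝ | 1 + a * x ≠ 0} = (fun x : ℝ => 1 + a * x) ⁻¹' ({0}ᶜ) := rfl
    rw [this]
    exact isOpen_compl_singleton.preimage (by continuity)
  have hφcont : ContinuousOn φ {x : ℝ | 1 + a * x ≠ 0} := fun x hx =>
    (hφd x hx).continuousAt.continuousWithinAt
  have hVopen : IsOpen V := hφcont.isOpen_inter_preimage hW hU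
  have hxbV : xb ∈ V := ⟨ht, hφ⟩
  -- the three functions
  set g : ℝ → ℝ := fun s => d * (1 + a * s) ^ 2 * y (φ s) with hgdef
  set g1 : ℝ → ℝ := fun s => d * (2 * a * (1 + a * s)) * y (φ s) + d * y1 (φ s) / b
    with hg1def
  set g2 : ℝ → ℝ := fun s => d * (2 * a ^ 2) * y (φ s) + 2 * a * d * y1 (φ s) / (b * (1 + a * s))
      + d * y2 (φ s) / (b ^ 2 * (1 + a * s) ^ 2) with hg2def
  -- first derivative
  have hA : ∀ s ∈ V, HasDerivAt g (g1 s) s := by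
    intro s hs
    obtain ⟨hts, hUs⟩ := hs
    have hts : 1 + a * s ≠ 0 := hts
    have hp := hφd s hts
    have hcomp : HasDerivAt (fun x => y (φ x)) (y1 (φ s) * (1 / (b * (1 + a * s) ^ 2))) s :=
      (hYd _ hUs).comp s hp
    have hpoly : HasDerivAt (fun x : ℝ => d * (1 + a * x) ^ 2) (d * (2 * a * (1 + a * s))) s := by
      have := ((hlin s).fun_pow 2).const_mul d
      refine this.congr_deriv ?_
      push_cast
      ring
    have key := hpoly.mul hcomp
    have hval : d * (2 * a * (1 + a * s)) * y (φ s)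
        + d * (1 + a * s) ^ 2 * (y1 (φ s) * (1 / (b * (1 + a * s) ^ 2))) = g1 s := by
      rw [hg1def]
      field_simp
      try ring
    rw [hval] at key
    exact key
  -- second derivative
  have hB : ∀ s ∈ V, HasDerivAt g1 (g2 s) s := by
    intro s hs
    obtain ⟨hts, hUs⟩ := hs
    have hts : 1 + a * s ≠ 0 := hts
    have hp := hφd s hts
    have hcomp : HasDerivAt (fun x => y (φ x)) (y1 (φ s) * (1 / (b * (1 + a * s) ^ 2))) s :=
      (hYd _ hUs).comp s hp
    have hcomp1 : HasDerivAt (fun x => y1 (φ x)) (y2 (φ s) * (1 / (b * (1 + a * s) ^ 2))) s :=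
      (hY1d _ hUs).comp s hp
    have hpoly : HasDerivAt (fun x : ℝ => d * (2 * a * (1 + a * x))) (d * (2 * a * a)) s := by
      have := ((hlin s).const_mul (2 * a)).const_mul d
      convert this using 1
      try ring
    have key := (hpoly.mul hcomp).add ((hcomp1.const_mul d).div_const b)
    have hval : d * (2 * a * a) * y (φ s)
        + d * (2 * a * (1 + a * s)) * (y1 (φ s) * (1 / (b * (1 + a * s) ^ 2)))
        + d * (y2 (φ s) * (1 / (b * (1 + a * s) ^ 2))) / b = g2 s := by
      rw [hg2def]
      field_simp
      try ring
    rw [hval] at key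
    exact key
  -- third derivative at xb
  have hC : HasDerivAt g2 (d * y3 (φ xb) / (b ^ 3 * (1 + a * xb) ^ 4)) xb := by
    have hp := hφd xb ht
    have hcomp : HasDerivAt (fun x => y (φ x)) (y1 (φ xb) * (1 / (b * (1 + a * xb) ^ 2))) xb :=
      (hYd _ hφ).comp xb hp
    have hcomp1 : HasDerivAt (fun x => y1 (φ x)) (y2 (φ xb) * (1 / (b * (1 + a * xb) ^ 2))) xb :=
      (hY1d _ hφ).comp xb hp
    have hcomp2 : HasDerivAt (fun x => y2 (φ x)) (y3 (φ xb) * (1 / (b * (1 + a * xb) ^ 2))) xb :=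
      (hY2d _ hφ).comp xb hp
    have hden1 : HasDerivAt (fun x : ℝ => b * (1 + a * x)) (b * a) xb := (hlin xb).const_mul b
    have hden1ne : b * (1 + a * xb) ≠ 0 := mul_ne_zero hb ht
    have hden2 : HasDerivAt (fun x : ℝ => b ^ 2 * (1 + a * x) ^ 2)
        (b ^ 2 * (2 * a * (1 + a * xb))) xb := by
      have := ((hlin xb).fun_pow 2).const_mul (b ^ 2)
      refine this.congr_deriv ?_
      push_cast
      ring
    have hden2ne : b ^ 2 * (1 + a * xb) ^ 2 ≠ 0 := by positivity
    have t1 := hcomp.const_mul (d * (2 * a ^ 2))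
    have t2 := (hcomp1.const_mul (2 * a * d)).div hden1 hden1ne
    have t3 := (hcomp2.const_mul d).div hden2 hden2ne
    have key := (t1.add t2).add t3
    have hval : d * (2 * a ^ 2) * (y1 (φ xb) * (1 / (b * (1 + a * xb) ^ 2)))
        + (2 * a * d * (y2 (φ xb) * (1 / (b * (1 + a * xb) ^ 2))) * (b * (1 + a * xb))
            - 2 * a * d * y1 (φ xb) * (b * a)) / (b * (1 + a * xb)) ^ 2
        + (d * (y3 (φ xb) * (1 / (b * (1 + a * xb) ^ 2))) * (b ^ 2 * (1 + a * xb) ^ 2)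
            - d * y2 (φ xb) * (b ^ 2 * (2 * a * (1 + a * xb)))) / (b ^ 2 * (1 + a * xb) ^ 2) ^ 2
        = d * y3 (φ xb) / (b ^ 3 * (1 + a * xb) ^ 4) := by
      field_simp
      try ring
    rw [hval] at key
    exact key
  -- assemble the third derivative of g
  have hmem : V ∈ nhds xb := hVopen.mem_nhds hxbV
  have e1 : deriv g =ᶠ[nhds xb] g1 :=
    Filter.eventuallyEq_of_mem hmem (fun s hs => (hA s hs).deriv)
  have e2 : deriv (deriv g) =ᶠ[nhds xb] g2 :=
    e1.deriv.trans (Filter.eventuallyEq_of_mem hmem (fun s hs => (hB s hs).deriv))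
  have h3g : iteratedDeriv 3 g xb = d * y3 (φ xb) / (b ^ 3 * (1 + a * xb) ^ 4) := by
    have : iteratedDeriv 3 g = deriv (deriv (deriv g)) := by
      simp [iteratedDeriv_succ, iteratedDeriv_zero]
    rw [this, e2.deriv_eq, hC.deriv]
  -- the ODE at phi xb
  have hodey : y3 (φ xb) = -(a0 (φ xb) * y (φ xb)) := by
    have h := hode (φ xb) hφ
    have : iteratedDeriv 3 y = y3 := by
      rw [hy3def, hy2def, hy1def]
      simp [iteratedDeriv_succ, iteratedDeriv_zero]
    rw [this] at h
    linarith
  show iteratedDeriv 3 g xb + a0 (φ xb) / (b ^ 3 * (1 + a * xb) ^ 6)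
      * (d * (1 + a * xb) ^ 2 * y (φ xb)) = 0
  rw [h3g, hodey]
  field_simp
  ring
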